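/- Given real numbers ū_i, ū_{i+1}, v̄_i, v̄_{i+1}, there exists a unique real polynomial q₃ of degree at most 3 whose cell averages over I_i and I_{i+1} equal ū_i and ū_{i+1} and whose first-order moments over I_i and I_{i+1} equal v̄_i and v̄_{i+1}; moreover q₃(x_i + Δx/2) = (1/2)ū_i + (1/2)ū_{i+1} + 2v̄_i − 2v̄_{i+1}. -/

import Mathlib

open MeasureTheory Polynomial

/-- Cell average of a polynomial over the cell of width `Δx` centered at `xc`. -/
noncomputable def cellAvg (xc Δx : ℝ) (p : Polynomial ℝ) : ℝ :=
  (1 / Δx) * ∫ x in (xc - Δx / 2)..(xc + Δx / 2), p.eval x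

/-- First-order moment of a polynomial over the cell of width `Δx` centered at `xc`. -/
noncomputable def cellMoment (xc Δx : ℝ) (p : Polynomial ℝ) : ℝ :=
  (1 / Δx) * ∫ x in (xc - Δx / 2)..(xc + Δx / 2), p.eval x * ((x - xc) / Δx)

lemma int4 (a b c d e l u : ℝ) :
    ∫ x in l..u, (a + b*x + c*x^2 + d*x^3 + e*x^4) =
      a*(u-l) + b*(u^2-l^2)/2 + c*(u^3-l^3)/3 + d*(u^4-l^4)/4 + e*(u^5-l^5)/5 := by
  have hder : ∀ x ∈ Set.uIcc l u,
      HasDerivAt (fun x : ℝ => a*x + b*x^2/2 + c*x^3/3 + d*x^4/4 + e*x^5/5)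
        (a + b*x + c*x^2 + d*x^3 + e*x^4) x := by
    intro x _
    have h1 := (hasDerivAt_id x).const_mul a
    have h2 := ((hasDerivAt_pow 2 x).const_mul b).div_const 2
    have h3 := ((hasDerivAt_pow 3 x).const_mul c).div_const 3
    have h4 := ((hasDerivAt_pow 4 x).const_mul d).div_const 4
    have h5 := ((hasDerivAt_pow 5 x).const_mul e).div_const 5
    refine ((((h1.add h2).add h3).add h4).add h5).congr_deriv ?_
    push_cast
    ring
  have hint : IntervalIntegrable (fun x : ℝ => a + b*x + c*x^2 + d*x^3 + e*x^4)
      MeasureTheory.volume l u := (by continuity : Continuous _).intervalIntegrable l u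
  rw [intervalIntegral.integral_eq_sub_of_hasDerivAt hder hint]
  ring

lemma avg_formula (xc Δx a b c d : ℝ) (hΔx : Δx ≠ 0) :
    cellAvg xc Δx (C a + C b * X + C c * X^2 + C d * X^3) =
      a + b*xc + c*(xc^2 + Δx^2/12) + d*(xc^3 + xc*Δx^2/4) := by
  unfold cellAvg
  have : (fun x : ℝ => eval x (C a + C b * X + C c * X^2 + C d * X^3)) =
      fun x : ℝ => a + b*x + c*x^2 + d*x^3 + 0*x^4 := by
    funext x; simp [eval_add, eval_mul, eval_pow]
  rw [this, int4]
  field_simp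
  ring

lemma mom_formula (xc Δx a b c d : ℝ) (hΔx : Δx ≠ 0) :
    cellMoment xc Δx (C a + C b * X + C c * X^2 + C d * X^3) =
      b*Δx/12 + c*xc*Δx/6 + d*(xc^2*Δx/4 + Δx^3/80) := by
  unfold cellMoment
  have : (fun x : ℝ => eval x (C a + C b * X + C c * X^2 + C d * X^3) * ((x - xc) / Δx)) =
      fun x : ℝ => (-a*xc/Δx) + ((a-b*xc)/Δx)*x + ((b-c*xc)/Δx)*x^2 + ((c-d*xc)/Δx)*x^3
        + (d/Δx)*x^4 := by
    funext x; simp only [eval_add, eval_mul, eval_pow, eval_C, eval_X]; field_simp; ring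
  rw [this, int4]
  field_simp
  ring

lemma repr3 (q : Polynomial ℝ) (hq : q.degree ≤ 3) :
    q = C (q.coeff 0) + C (q.coeff 1) * X + C (q.coeff 2) * X^2 + C (q.coeff 3) * X^3 := by
  ext n
  match n with
  | 0 => simp [coeff_X]
  | 1 => simp [coeff_X]
  | 2 => simp [coeff_X]
  | 3 => simp [coeff_X]
  | (n+4) =>
    have h0 : q.coeff (n+4) = 0 := by
      apply coeff_eq_zero_of_degree_lt
      exact lt_of_le_of_lt hq (by exact_mod_cast by norm_num : (3:WithBot ℕ) < (n+4 : ℕ))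
    simp [h0, coeff_X]

lemma coeffs_eq (xi Δx ub ubp vb vbp a b c d a' b' c' d' : ℝ) (hΔx : Δx ≠ 0)
    (h1 : a + b*xi + c*(xi^2 + Δx^2/12) + d*(xi^3 + xi*Δx^2/4) = ub)
    (h2 : a + b*(xi+Δx) + c*((xi+Δx)^2 + Δx^2/12) + d*((xi+Δx)^3 + (xi+Δx)*Δx^2/4) = ubp)
    (h3 : b*Δx/12 + c*xi*Δx/6 + d*(xi^2*Δx/4 + Δx^3/80) = vb)
    (h4 : b*Δx/12 + c*(xi+Δx)*Δx/6 + d*((xi+Δx)^2*Δx/4 + Δx^3/80) = vbp)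
    (h1' : a' + b'*xi + c'*(xi^2 + Δx^2/12) + d'*(xi^3 + xi*Δx^2/4) = ub)
    (h2' : a' + b'*(xi+Δx) + c'*((xi+Δx)^2 + Δx^2/12) + d'*((xi+Δx)^3 + (xi+Δx)*Δx^2/4) = ubp)
    (h3' : b'*Δx/12 + c'*xi*Δx/6 + d'*(xi^2*Δx/4 + Δx^3/80) = vb)
    (h4' : b'*Δx/12 + c'*(xi+Δx)*Δx/6 + d'*((xi+Δx)^2*Δx/4 + Δx^3/80) = vbp) :
    a = a' ∧ b = b' ∧ c = c' ∧ d = d' := by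
  have hd : d = d' := by
    have h : Δx^3*d = Δx^3*d' := by
      linear_combination (5/2)*h1 - (5/2)*h2 + 15*h3 + 15*h4
        - ((5/2)*h1' - (5/2)*h2' + 15*h3' + 15*h4')
    exact mul_left_cancel₀ (pow_ne_zero 3 hΔx) h
  have hc : c = c' := by
    have h : Δx^2*c = Δx^2*c' := by
      linear_combination (-6)*h3 + 6*h4 + 6*h3' - 6*h4' - 3*(xi+Δx/2)*Δx^2*hd
    exact mul_left_cancel₀ (pow_ne_zero 2 hΔx) h
  have hb : b = b' := by
    have h : Δx*b = Δx*b' := by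
      linear_combination (-(9/4))*h1 + (9/4)*h2 - (15/2)*h3 - (15/2)*h4
        - ((-(9/4))*h1' + (9/4)*h2' - (15/2)*h3' - (15/2)*h4')
        - 2*(xi+Δx/2)*Δx*hc - 3*(xi+Δx/2)^2*Δx*hd
    exact mul_left_cancel₀ hΔx h
  have ha : a = a' := by
    linear_combination (1/2)*(h1-h1') + (1/2)*(h2-h2') + 2*(h3-h3') - 2*(h4-h4')
      - (xi+Δx/2)*hb - (xi+Δx/2)^2*hc - (xi+Δx/2)^3*hd
  exact ⟨ha, hb, hc, hd⟩

set_option maxHeartbeats 1000000 in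
theorem stmt10 (xi Δx : ℝ) (hΔx : 0 < Δx) (ub ubp vb vbp : ℝ) :
    (∃! q : Polynomial ℝ, q.degree ≤ 3 ∧
      cellAvg xi Δx q = ub ∧ cellAvg (xi + Δx) Δx q = ubp ∧
      cellMoment xi Δx q = vb ∧ cellMoment (xi + Δx) Δx q = vbp) ∧
    (∀ q : Polynomial ℝ, q.degree ≤ 3 →
      cellAvg xi Δx q = ub → cellAvg (xi + Δx) Δx q = ubp →
      cellMoment xi Δx q = vb → cellMoment (xi + Δx) Δx q = vbp →
      q.eval (xi + Δx / 2) = (1 / 2) * ub + (1 / 2) * ubp + 2 * vb - 2 * vbp) := by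
  have hD : Δx ≠ 0 := ne_of_gt hΔx
  set m : ℝ := xi + Δx/2 with hm
  set a0 : ℝ := (1/2)*ub + (1/2)*ubp + 2*vb - 2*vbp with ha0
  set b0 : ℝ := -(9/4)*ub + (9/4)*ubp - (15/2)*vb - (15/2)*vbp with hb0
  set c0 : ℝ := -6*vb + 6*vbp with hc0
  set d0 : ℝ := (5/2)*ub - (5/2)*ubp + 15*vb + 15*vbp with hd0
  set d₁ : ℝ := d0/Δx^3 with hd1
  set c₁ : ℝ := (c0*Δx - 3*m*d0)/Δx^3 with hc1
  set b₁ : ℝ := (b0*Δx^2 - 2*m*c0*Δx + 3*m^2*d0)/Δx^3 with hb1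
  set a₁ : ℝ := (a0*Δx^3 - m*b0*Δx^2 + m^2*c0*Δx - m^3*d0)/Δx^3 with ha1
  have H1 : a₁ + b₁*xi + c₁*(xi^2 + Δx^2/12) + d₁*(xi^3 + xi*Δx^2/4) = ub := by
    rw [ha1, hb1, hc1, hd1, hm, ha0, hb0, hc0, hd0]; field_simp; ring
  have H2 : a₁ + b₁*(xi+Δx) + c₁*((xi+Δx)^2 + Δx^2/12) + d₁*((xi+Δx)^3 + (xi+Δx)*Δx^2/4) = ubp := by
    rw [ha1, hb1, hc1, hd1, hm, ha0, hb0, hc0, hd0]; field_simp; ring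
  have H3 : b₁*Δx/12 + c₁*xi*Δx/6 + d₁*(xi^2*Δx/4 + Δx^3/80) = vb := by
    rw [hb1, hc1, hd1, hm, hb0, hc0, hd0]; field_simp; ring
  have H4 : b₁*Δx/12 + c₁*(xi+Δx)*Δx/6 + d₁*((xi+Δx)^2*Δx/4 + Δx^3/80) = vbp := by
    rw [hb1, hc1, hd1, hm, hb0, hc0, hd0]; field_simp; ring
  constructor
  · refine ⟨C a₁ + C b₁ * X + C c₁ * X^2 + C d₁ * X^3, ⟨?_, ?_, ?_, ?_, ?_⟩, ?_⟩
    · compute_degree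
    · rw [avg_formula _ _ _ _ _ _ hD]; exact H1
    · rw [avg_formula _ _ _ _ _ _ hD]; exact H2
    · rw [mom_formula _ _ _ _ _ _ hD]; exact H3
    · rw [mom_formula _ _ _ _ _ _ hD]; exact H4
    · rintro q' ⟨hdeg', h1', h2', h3', h4'⟩
      rw [repr3 q' hdeg'] at h1' h2' h3' h4' ⊢
      rw [avg_formula _ _ _ _ _ _ hD] at h1' h2'
      rw [mom_formula _ _ _ _ _ _ hD] at h3' h4'
      obtain ⟨e1, e2, e3, e4⟩ := coeffs_eq xi Δx ub ubp vb vbp _ _ _ _ a₁ b₁ c₁ d₁ hD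
        h1' h2' h3' h4' H1 H2 H3 H4
      rw [e1, e2, e3, e4]
  · intro q hdeg h1 h2 h3 h4
    rw [repr3 q hdeg] at h1 h2 h3 h4 ⊢
    rw [avg_formula _ _ _ _ _ _ hD] at h1 h2
    rw [mom_formula _ _ _ _ _ _ hD] at h3 h4
    simp only [eval_add, eval_mul, eval_pow, eval_C, eval_X]
    linear_combination (1/2)*h1 + (1/2)*h2 + 2*h3 - 2*h4
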